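/- Every element of the biHecke monoid preserves left weak order: if f is any composition of the operators π_i and π̄_i on a finite Coxeter group W, then u ≤_L v implies u·f ≤_L v·f. -/

import Mathlib

open scoped Classical

noncomputable section

variable {B W : Type*} [Group W] {M : CoxeterMatrix B}

/-- The elementary bubble antisorting operator `π_i` on a Coxeter group:
`w·π_i = w` if `i` is a right descent of `w`, and `w·π_i = w s_i` otherwise. -/
noncomputable def piOp (cs : CoxeterSystem M W) (i : B) : W → W :=
  fun w => if cs.IsRightDescent w i then w else w * cs.simple i

/-- The elementary bubble sorting operator `π̄_i` on a Coxeter group: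
`w·π̄_i = w s_i` if `i` is a right descent of `w`, and `w·π̄_i = w` otherwise. -/
noncomputable def pibOp (cs : CoxeterSystem M W) (i : B) : W → W :=
  fun w => if cs.IsRightDescent w i then w * cs.simple i else w

/-- The biHecke monoid: the submonoid of `Function.End W` generated by the antisorting
operators `π_i` and the sorting operators `π̄_i`. -/
noncomputable def biHecke (cs : CoxeterSystem M W) : Submonoid (Function.End W) :=
  Submonoid.closure ({f | ∃ i, f = piOp cs i} ∪ {f | ∃ i, f = pibOp cs i})

/-- Left weak order: `u ≤_L v` iff `ℓ(v u⁻¹) + ℓ(u) = ℓ(v)`. -/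
noncomputable def leL (cs : CoxeterSystem M W) (u v : W) : Prop :=
  cs.length (v * u⁻¹) + cs.length u = cs.length v

/-- Right weak order: `u ≤_R v` iff `ℓ(u) + ℓ(u⁻¹ v) = ℓ(v)`. -/
noncomputable def leR (cs : CoxeterSystem M W) (u v : W) : Prop :=
  cs.length u + cs.length (u⁻¹ * v) = cs.length v

/-- Bruhat order: `u ≤_B v` iff some reduced word of `v` has a subword with product `u`. -/
noncomputable def leB (cs : CoxeterSystem M W) (u v : W) : Prop :=
  ∃ l : List B, cs.IsReduced l ∧ cs.wordProd l = v ∧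
    ∃ l' : List B, l'.Sublist l ∧ cs.wordProd l' = u

/-- Right action of a word of operators: apply the operators from left to right. -/
noncomputable def actWord (ops : B → W → W) (l : List B) (w : W) : W :=
  l.foldl (fun x i => ops i x) w

/-- The function `e_w = π_{w⁻¹ w₀} π̄_{w₀ w}` (given reduced words `l1` for `w⁻¹ w₀` and
`l2` for `w₀ w`), acting on the right. -/
noncomputable def eIdem (cs : CoxeterSystem M W) (l1 l2 : List B) : W → W :=
  fun x => actWord (pibOp cs) l2 (actWord (piOp cs) l1 x)

/-- The parabolic subgroup `W_K`. -/
noncomputable def parab (cs : CoxeterSystem M W) (K : Set B) : Subgroup W :=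
  Subgroup.closure (cs.simple '' K)

/-- `K` is a right block of `w` if `w W_K = W_J w` for some `J`. -/
noncomputable def isRightBlock (cs : CoxeterSystem M W) (w : W) (K : Set B) : Prop :=
  ∃ J : Set B, (fun x => w * x) '' (parab cs K : Set W) = (fun x => x * w) '' (parab cs J : Set W)

/-- `J` is a left block of `w` if `w W_K = W_J w` for some `K`. -/
noncomputable def isLeftBlock (cs : CoxeterSystem M W) (w : W) (J : Set B) : Prop :=
  ∃ K : Set B, (fun x => w * x) '' (parab cs K : Set W) = (fun x => x * w) '' (parab cs J : Set W)

/-- The cutting relation: `v ⊑ w` iff `v = w^K` for some right block `K` of `w`, i.e.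
`w = v · u` with `u ∈ W_K` and `v` has no right descents in `K`. -/
noncomputable def cuts (cs : CoxeterSystem M W) (v w : W) : Prop :=
  ∃ K J : Set B,
    ((fun x => w * x) '' (parab cs K : Set W) = (fun x => x * w) '' (parab cs J : Set W)) ∧
    ∃ u ∈ parab cs K, w = v * u ∧ ∀ k ∈ K, ¬ cs.IsRightDescent v k

/-- Covering relation of left weak order. -/
noncomputable def covL (cs : CoxeterSystem M W) (x y : W) : Prop :=
  leL cs x y ∧ x ≠ y ∧ ∀ z, leL cs x z → leL cs z y → z = x ∨ z = y

end


section BiHeckeAux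

open List

variable {B W : Type*} [Group W] {M : CoxeterMatrix B} (cs : CoxeterSystem M W)

theorem bh_ris_append (a b : List B) :
    cs.rightInvSeq (a ++ b) =
      (cs.rightInvSeq a).map (fun t => (cs.wordProd b)⁻¹ * t * cs.wordProd b)
        ++ cs.rightInvSeq b := by
  induction a with
  | nil => simp [CoxeterSystem.rightInvSeq]
  | cons i a ih =>
    show _ :: cs.rightInvSeq (a ++ b) = _
    rw [ih]
    congr 1
    rw [show a.append b = a ++ b from rfl, cs.wordProd_append, mul_inv_rev]
    group

/-- The sign-flipping operator used for the reflection representation. -/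
noncomputable def bhEta (i : B) : Function.End (W × ℤˣ) :=
  fun p => (cs.simple i * p.1 * cs.simple i, if p.1 = cs.simple i then -p.2 else p.2)

/-- Composite of `bhEta` along a word. -/
noncomputable def bhE (ω : List B) : Function.End (W × ℤˣ) := (ω.map (bhEta cs)).prod

theorem bhE_apply (ω : List B) (t : W) (ε : ℤˣ) :
    bhE cs ω (t, ε) = (cs.wordProd ω * t * (cs.wordProd ω)⁻¹,
      (-1 : ℤˣ) ^ ((cs.rightInvSeq ω).count t) * ε) := by
  induction ω generalizing t ε with
  | nil =>
    show (t, ε) = _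
    simp
  | cons i ω ih =>
    have h1 : bhE cs (i :: ω) (t, ε) = bhEta cs i (bhE cs ω (t, ε)) := rfl
    rw [h1, ih]
    show (_, _) = _
    have hcount : ((cs.rightInvSeq (i :: ω)).count t) =
        (cs.rightInvSeq ω).count t + if ((cs.wordProd ω)⁻¹ * cs.simple i * cs.wordProd ω) = t then 1 else 0 := by
      show (((cs.wordProd ω)⁻¹ * cs.simple i * cs.wordProd ω) :: cs.rightInvSeq ω).count t = _
      rw [List.count_cons]
      simp
    rw [hcount]
    have hcond : (cs.wordProd ω * t * (cs.wordProd ω)⁻¹ = cs.simple i)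
        ↔ ((cs.wordProd ω)⁻¹ * cs.simple i * cs.wordProd ω = t) := by
      constructor <;> intro h <;> [rw [← h]; rw [← h]] <;> group
    by_cases hc : (cs.wordProd ω)⁻¹ * cs.simple i * cs.wordProd ω = t
    · rw [if_pos (hcond.mpr hc), if_pos hc]
      refine Prod.ext ?_ ?_ <;> dsimp only
      · rw [cs.wordProd_cons, mul_inv_rev, cs.inv_simple]; group
      · rw [pow_succ, mul_neg_one, neg_mul]
    · rw [if_neg (fun h => hc (hcond.mp h)), if_neg hc]
      refine Prod.ext ?_ ?_ <;> dsimp only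
      · rw [cs.wordProd_cons, mul_inv_rev, cs.inv_simple]; group
      · rw [Nat.add_zero]

theorem bhPow_eq_bhE (i i' : B) (m : ℕ) :
    (bhEta cs i * bhEta cs i') ^ m = bhE cs (CoxeterSystem.alternatingWord i i' (2 * m)) := by
  induction m with
  | zero => rfl
  | succ m ih =>
    have h2 : 2 * (m + 1) = (2 * m + 1) + 1 := by omega
    rw [h2, CoxeterSystem.alternatingWord_succ' i i' (2 * m + 1),
      CoxeterSystem.alternatingWord_succ' i i' (2 * m)]
    have he : ¬ Even (2 * m + 1) := by simp [Nat.even_add_one]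
    have he2 : Even (2 * m) := even_two_mul m
    rw [if_neg he, if_pos he2]
    show _ = (bhEta cs i) * ((bhEta cs i') * bhE cs (CoxeterSystem.alternatingWord i i' (2 * m)))
    rw [← ih, pow_succ', mul_assoc]

theorem bh_drop_alternatingWord (i i' : B) (n k : ℕ) :
    (CoxeterSystem.alternatingWord i i' n).drop k = CoxeterSystem.alternatingWord i i' (n - k) := by
  induction k generalizing n with
  | zero => simp
  | succ k ih =>
    cases n with
    | zero => simp [CoxeterSystem.alternatingWord]
    | succ n =>
      rw [CoxeterSystem.alternatingWord_succ', List.drop_succ_cons, ih]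
      congr 1
      omega

theorem bh_simple_conj_pow (i i' : B) (k : ℕ) :
    cs.simple i' * (cs.simple i * cs.simple i') ^ k
      = ((cs.simple i * cs.simple i') ^ k)⁻¹ * cs.simple i' := by
  induction k with
  | zero => simp
  | succ k ih =>
    have hss : cs.simple i' * (cs.simple i * cs.simple i')
        = (cs.simple i * cs.simple i')⁻¹ * cs.simple i' := by
      rw [mul_inv_rev, cs.inv_simple, cs.inv_simple]; group
    have hcm := (((Commute.refl (cs.simple i * cs.simple i')).pow_right k).inv_inv).eq
    rw [pow_succ, ← mul_assoc, ih, mul_assoc, hss, ← mul_assoc,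
      mul_inv_rev ((cs.simple i * cs.simple i') ^ k) (cs.simple i * cs.simple i'), hcm]

theorem bhF (i i' : B) (n : ℕ) :
    (cs.wordProd (CoxeterSystem.alternatingWord i i' n))⁻¹
        * cs.wordProd (CoxeterSystem.alternatingWord i i' (n + 1))
      = ((cs.simple i * cs.simple i') ^ n)⁻¹ * cs.simple i' := by
  rw [cs.prod_alternatingWord_eq_mul_pow, cs.prod_alternatingWord_eq_mul_pow]
  by_cases he : Even n
  · have he1 : ¬ Even (n + 1) := by simp [Nat.even_add_one, he]
    rw [if_pos he, if_neg he1]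
    obtain ⟨k, hk⟩ := he
    have hd1 : n / 2 = k := by omega
    have hd2 : (n + 1) / 2 = k := by omega
    rw [hd1, hd2, one_mul, bh_simple_conj_pow cs i i' k, ← mul_assoc,
      ← mul_inv_rev, ← pow_add]
    congr 2
    rw [hk]
  · have he1 : Even (n + 1) := by simp [Nat.even_add_one, he]
    rw [if_neg he, if_pos he1]
    obtain ⟨j, hj⟩ := Nat.not_even_iff_odd.mp he
    have hd1 : n / 2 = j := by omega
    have hd2 : (n + 1) / 2 = j + 1 := by omega
    rw [hd1, hd2, one_mul, mul_inv_rev, cs.inv_simple, mul_assoc,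
      bh_simple_conj_pow cs i i' (j + 1), ← mul_assoc, ← mul_inv_rev, ← pow_add]
    congr 2
    rw [show j + 1 + j = n by omega]

theorem bh_ris_getD (ω : List B) (j : ℕ) (hj : j < ω.length) :
    (cs.rightInvSeq ω).getD j 1
      = (cs.wordProd (ω.drop (j + 1)))⁻¹ * cs.wordProd (ω.drop j) := by
  rw [cs.getD_rightInvSeq]
  have h1 : ω.drop j = ω[j] :: ω.drop (j + 1) := List.drop_eq_getElem_cons hj
  have h2 : ω[j]? = some ω[j] := by
    rw [List.getElem?_eq_getElem hj]
  rw [h1, h2, cs.wordProd_cons]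
  simp [mul_assoc]

theorem bh_count_ris_alt_even (i i' : B) (t : W) :
    Even ((cs.rightInvSeq (CoxeterSystem.alternatingWord i i' (2 * M i i'))).count t) := by
  set m := M i i' with hm
  set ω2 := CoxeterSystem.alternatingWord i i' (2 * m) with hω2
  set L := cs.rightInvSeq ω2 with hL
  have hω2len : ω2.length = 2 * m := by rw [hω2, CoxeterSystem.length_alternatingWord]
  have hlen : L.length = 2 * m := by rw [hL, CoxeterSystem.length_rightInvSeq, hω2len]
  have hval : ∀ j, j < 2 * m → L.getD j 1
      = ((cs.simple i * cs.simple i') ^ (2 * m - j - 1))⁻¹ * cs.simple i' := by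
    intro j hjlt
    rw [hL, bh_ris_getD cs ω2 j (by omega), hω2, bh_drop_alternatingWord,
      bh_drop_alternatingWord, show 2 * m - j = (2 * m - (j + 1)) + 1 by omega, bhF]
    congr 3
  have hpow : (cs.simple i * cs.simple i') ^ m = 1 := cs.simple_mul_simple_pow i i'
  have hhalf : L.take m = L.drop m := by
    apply List.ext_getElem
    · rw [List.length_take, List.length_drop, hlen]
      omega
    · intro j h1 h2
      rw [List.length_take, hlen] at h1
      have hj : j < m := by omega
      rw [List.getElem_take, List.getElem_drop]
      rw [← List.getD_eq_getElem L 1 (by omega), ← List.getD_eq_getElem L 1 (by omega)]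
      rw [hval j (by omega), hval (m + j) (by omega)]
      congr 2
      rw [show 2 * m - j - 1 = m + (m - j - 1) by omega, pow_add, hpow, one_mul]
      congr 1
      omega
  have hsplit : L = L.take m ++ L.drop m := (List.take_append_drop m L).symm
  rw [hsplit, List.count_append, ← hhalf]
  exact Even.add_self _

theorem bhLiftable : M.IsLiftable (bhEta cs) := by
  intro i i'
  rw [bhPow_eq_bhE]
  funext p
  obtain ⟨t, ε⟩ := p
  rw [bhE_apply]
  have hprod : cs.wordProd (CoxeterSystem.alternatingWord i i' (2 * M i i')) = 1 := by
    rw [cs.prod_alternatingWord_eq_mul_pow, if_pos (even_two_mul _),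
      show 2 * M i i' / 2 = M i i' by omega, one_mul]
    exact cs.simple_mul_simple_pow i i'
  rw [hprod, Even.neg_one_pow (bh_count_ris_alt_even cs i i' t)]
  show _ = (t, ε)
  simp

theorem bhE_eq_of_wordProd_eq {ω ω' : List B} (h : cs.wordProd ω = cs.wordProd ω') :
    bhE cs ω = bhE cs ω' := by
  have key : ∀ τ : List B, (cs.lift ⟨bhEta cs, bhLiftable cs⟩) (cs.wordProd τ) = bhE cs τ := by
    intro τ
    induction τ with
    | nil => rw [cs.wordProd_nil, map_one]; rfl
    | cons i τ ih =>
      rw [cs.wordProd_cons, map_mul, ih, cs.lift_apply_simple]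
      rfl
  rw [← key, ← key, h]

/-- Strong exchange property, for simple reflections. -/
theorem bh_simple_mem_ris {ω : List B} (hω : cs.IsReduced ω) {i : B}
    (hd : cs.IsRightDescent (cs.wordProd ω) i) : cs.simple i ∈ cs.rightInvSeq ω := by
  obtain ⟨τ, hτlen, hτ⟩ := cs.exists_reduced_word (cs.wordProd ω * cs.simple i)
  have hτred : cs.IsReduced τ := hτlen
  have hπ0 : cs.wordProd (τ ++ [i]) = cs.wordProd ω := by
    rw [cs.wordProd_append, cs.wordProd_singleton, ← hτ, cs.simple_mul_simple_cancel_right]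
  have hE := bhE_eq_of_wordProd_eq cs hπ0.symm
  have h1 := bhE_apply cs ω (cs.simple i) 1
  have h2 := bhE_apply cs (τ ++ [i]) (cs.simple i) 1
  rw [hE] at h1
  rw [h1] at h2
  have hsig0 := congrArg Prod.snd h2
  simp only [mul_one] at hsig0
  have hsig : (-1 : ℤˣ) ^ ((cs.rightInvSeq ω).count (cs.simple i))
      = (-1 : ℤˣ) ^ ((cs.rightInvSeq (τ ++ [i])).count (cs.simple i)) := hsig0
  have hc2 : (cs.rightInvSeq (τ ++ [i])).count (cs.simple i) = 1 := by
    rw [bh_ris_append]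
    rw [List.count_append]
    have hnotin : cs.simple i ∉ cs.rightInvSeq τ := by
      intro hmem
      have := (cs.isRightInversion_of_mem_rightInvSeq hτred hmem).2
      rw [← hτ, cs.simple_mul_simple_cancel_right] at this
      exact (Nat.lt_asymm hd) this
    have hmapcount : ((cs.rightInvSeq τ).map
        (fun t => (cs.wordProd [i])⁻¹ * t * cs.wordProd [i])).count (cs.simple i) = 0 := by
      rw [List.count_eq_zero]
      intro hmem
      obtain ⟨x, hx, hxe⟩ := List.mem_map.mp hmem
      rw [cs.wordProd_singleton, cs.inv_simple] at hxe
      have hxi : x = cs.simple i := by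
        have h5 := congrArg (fun z => cs.simple i * z * cs.simple i) hxe
        simp only [← mul_assoc, cs.simple_mul_simple_cancel_left] at h5
        simpa [mul_assoc, cs.simple_mul_simple_self] using h5
      rw [hxi] at hx
      exact hnotin hx
    rw [hmapcount]
    simp
  rw [hc2, pow_one] at hsig
  have hodd : (cs.rightInvSeq ω).count (cs.simple i) ≠ 0 := by
    intro h0
    rw [h0, pow_zero] at hsig
    exact (by decide : (1 : ℤˣ) ≠ -1) hsig
  exact List.count_pos_iff.mp (Nat.pos_of_ne_zero hodd)

/-- The key lemma: if `u ≤L v`, `i` is not a right descent of `u` but is one of `v`,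
then `ℓ(v sᵢ u⁻¹) + 1 = ℓ(v u⁻¹)`. -/
theorem bh_key {u v : W} {i : B} (huv : cs.length (v * u⁻¹) + cs.length u = cs.length v)
    (hdu : ¬ cs.IsRightDescent u i) (hdv : cs.IsRightDescent v i) :
    cs.length (v * cs.simple i * u⁻¹) + 1 = cs.length (v * u⁻¹) := by
  obtain ⟨a, hared, ha⟩ := cs.exists_reduced_word' (v * u⁻¹)
  obtain ⟨b, hbred, hb⟩ := cs.exists_reduced_word' u
  have hπ : cs.wordProd (a ++ b) = v := by
    rw [cs.wordProd_append, ← ha, ← hb, inv_mul_cancel_right]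
  have habred : cs.IsReduced (a ++ b) := by
    rw [CoxeterSystem.IsReduced, hπ, List.length_append, ← hared, ← hbred, ← ha, ← hb, huv]
  have hmem : cs.simple i ∈ cs.rightInvSeq (a ++ b) := by
    apply bh_simple_mem_ris cs habred
    rw [hπ]; exact hdv
  rw [bh_ris_append] at hmem
  rcases List.mem_append.mp hmem with hmem | hmem
  · obtain ⟨x, hx, hxe⟩ := List.mem_map.mp hmem
    have hxval : x = u * cs.simple i * u⁻¹ := by
      rw [← hb] at hxe
      have h5 := congrArg (fun z => u * z * u⁻¹) hxe
      simp only [← mul_assoc, mul_inv_cancel_right, mul_inv_cancel] at h5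
      rw [one_mul] at h5
      exact h5
    have hinv := (cs.isRightInversion_of_mem_rightInvSeq hared hx).2
    rw [hxval, ← ha] at hinv
    have hsimp : v * u⁻¹ * (u * cs.simple i * u⁻¹) = v * cs.simple i * u⁻¹ := by group
    rw [hsimp] at hinv
    -- lower bound
    have hlow : cs.length (v * cs.simple i) ≤ cs.length (v * cs.simple i * u⁻¹) + cs.length u := by
      have := cs.length_mul_le (v * cs.simple i * u⁻¹) u
      rwa [inv_mul_cancel_right] at this
    have hvs : cs.length (v * cs.simple i) + 1 = cs.length v := (cs.isRightDescent_iff).mp hdv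
    omega
  · have := (cs.isRightInversion_of_mem_rightInvSeq hbred hmem).2
    rw [← hb] at this
    exact absurd this hdu

theorem bh_pi_mono {u v : W} (i : B) (huv : leL cs u v) :
    leL cs (piOp cs i u) (piOp cs i v) := by
  unfold leL at *
  unfold piOp
  by_cases hdu : cs.IsRightDescent u i <;> by_cases hdv : cs.IsRightDescent v i
  · rw [if_pos hdu, if_pos hdv]; exact huv
  · exfalso
    apply hdv
    have h1 : cs.length (v * cs.simple i) ≤ cs.length (v * u⁻¹) + cs.length (u * cs.simple i) := by
      have := cs.length_mul_le (v * u⁻¹) (u * cs.simple i)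
      rwa [show v * u⁻¹ * (u * cs.simple i) = v * cs.simple i by group] at this
    have h2 : cs.length (u * cs.simple i) + 1 = cs.length u := (cs.isRightDescent_iff).mp hdu
    have h3 : cs.length u ≤ cs.length v := by omega
    unfold CoxeterSystem.IsRightDescent
    omega
  · rw [if_neg hdu, if_pos hdv]
    have hkey := bh_key cs huv hdu hdv
    have h2 : cs.length (u * cs.simple i) = cs.length u + 1 := (cs.not_isRightDescent_iff).mp hdu
    rw [mul_inv_rev, cs.inv_simple, ← mul_assoc, h2]
    omega
  · rw [if_neg hdu, if_neg hdv]
    have h1 : cs.length (u * cs.simple i) = cs.length u + 1 := (cs.not_isRightDescent_iff).mp hdu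
    have h2 : cs.length (v * cs.simple i) = cs.length v + 1 := (cs.not_isRightDescent_iff).mp hdv
    rw [mul_inv_rev, cs.inv_simple, show v * cs.simple i * (cs.simple i * u⁻¹) = v * u⁻¹ by
      rw [← mul_assoc, cs.simple_mul_simple_cancel_right], h1, h2]
    omega

theorem bh_pib_mono {u v : W} (i : B) (huv : leL cs u v) :
    leL cs (pibOp cs i u) (pibOp cs i v) := by
  unfold leL at *
  unfold pibOp
  by_cases hdu : cs.IsRightDescent u i <;> by_cases hdv : cs.IsRightDescent v i
  · rw [if_pos hdu, if_pos hdv]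
    have h1 : cs.length (u * cs.simple i) + 1 = cs.length u := (cs.isRightDescent_iff).mp hdu
    have h2 : cs.length (v * cs.simple i) + 1 = cs.length v := (cs.isRightDescent_iff).mp hdv
    rw [mul_inv_rev, cs.inv_simple, show v * cs.simple i * (cs.simple i * u⁻¹) = v * u⁻¹ by
      rw [← mul_assoc, cs.simple_mul_simple_cancel_right]]
    omega
  · exfalso
    apply hdv
    have h1 : cs.length (v * cs.simple i) ≤ cs.length (v * u⁻¹) + cs.length (u * cs.simple i) := by
      have := cs.length_mul_le (v * u⁻¹) (u * cs.simple i)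
      rwa [show v * u⁻¹ * (u * cs.simple i) = v * cs.simple i by group] at this
    have h2 : cs.length (u * cs.simple i) + 1 = cs.length u := (cs.isRightDescent_iff).mp hdu
    have h3 : cs.length u ≤ cs.length v := by omega
    unfold CoxeterSystem.IsRightDescent
    omega
  · rw [if_neg hdu, if_pos hdv]
    have hkey := bh_key cs huv hdu hdv
    have h2 : cs.length (v * cs.simple i) + 1 = cs.length v := (cs.isRightDescent_iff).mp hdv
    omega
  · rw [if_neg hdu, if_neg hdv]; exact huv

end BiHeckeAux

/-- Every element of the biHecke monoid preserves left weak order. -/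
theorem biHecke_preserves_leftOrder {B W : Type*} [Group W] [Finite W] {M : CoxeterMatrix B}
    (cs : CoxeterSystem M W) (f : Function.End W) (hf : f ∈ biHecke cs)
    (u v : W) (huv : leL cs u v) : leL cs (f u) (f v) := by
  have H : ∀ u v : W, leL cs u v → leL cs (f u) (f v) := by
    induction hf using Submonoid.closure_induction with
    | mem g hg =>
      rcases hg with ⟨i, rfl⟩ | ⟨i, rfl⟩
      · exact fun u v h => bh_pi_mono cs i h
      · exact fun u v h => bh_pib_mono cs i h
    | one => exact fun u v h => h
    | mul g₁ g₂ hg₁ hg₂ ih₁ ih₂ => exact fun u v h => ih₁ _ _ (ih₂ _ _ h)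
  exact H u v huv
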